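/- For matrices A ∈ ℝ^{J×R} and B ∈ ℝ^{I×R} with k-ranks k_A, k_B ≥ 1, if k_A + k_B ≥ R + 1 then the Khatri-Rao product A ⊙ B ∈ ℝ^{JI×R} has full column rank R. -/

import Mathlib

open scoped BigOperators

/-- The k-rank (Kruskal rank) of a matrix: the largest `k ≤ R` such that every
set of `k` columns is linearly independent. -/
noncomputable def kRank {J R : ℕ} (A : Matrix (Fin J) (Fin R) ℝ) : ℕ :=
  sSup {k | k ≤ R ∧ ∀ s : Finset (Fin R), s.card = k →
    LinearIndependent ℝ (fun r : s => A.transpose r.val)}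

/-- The Khatri-Rao (column-wise Kronecker) product. -/
def khatriRao {J I R : ℕ} (A : Matrix (Fin J) (Fin R) ℝ)
    (B : Matrix (Fin I) (Fin R) ℝ) : Matrix (Fin J × Fin I) (Fin R) ℝ :=
  fun p r => A p.1 r * B p.2 r

lemma kRank_mem {J R : ℕ} (A : Matrix (Fin J) (Fin R) ℝ) :
    kRank A ∈ {k | k ≤ R ∧ ∀ s : Finset (Fin R), s.card = k →
      LinearIndependent ℝ (fun r : s => A.transpose r.val)} := by
  apply Nat.sSup_mem
  · exact ⟨0, Nat.zero_le R, fun s hs => by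
      rw [Finset.card_eq_zero] at hs
      subst hs
      exact linearIndependent_empty_type⟩
  · exact ⟨R, fun k hk => hk.1⟩

lemma kRank_le {J R : ℕ} (A : Matrix (Fin J) (Fin R) ℝ) : kRank A ≤ R :=
  (kRank_mem A).1

/-- any set of at most `kRank A` columns is linearly independent -/
lemma cols_li {J R : ℕ} (A : Matrix (Fin J) (Fin R) ℝ) (s : Finset (Fin R))
    (hs : s.card ≤ kRank A) :
    LinearIndependent ℝ (fun r : s => A.transpose r.val) := by
  obtain ⟨t, hst, ht⟩ := Finset.exists_superset_card_eq
    (hs.trans (kRank_le A)) (by simp [Fintype.card_fin])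
  obtain ⟨t', hst', ht'⟩ := Finset.exists_superset_card_eq hs
    ((kRank_le A).trans_eq (Fintype.card_fin R).symm)
  have h := (kRank_mem A).2 t' ht'
  have := h.comp (fun r : s => (⟨r.1, hst' r.2⟩ : t'))
    (fun a b hab => by
      apply Subtype.ext
      have hv := congrArg Subtype.val hab; exact hv)
  exact this

/-- linear combination of at most `kRank B` columns vanishing gives zero coefficients -/
lemma li_combo {I R : ℕ} (B : Matrix (Fin I) (Fin R) ℝ) (s : Finset (Fin R))
    (hs : s.card ≤ kRank B) (d : Fin R → ℝ)
    (hd : ∀ i, ∑ r ∈ s, d r * B i r = 0) : ∀ r ∈ s, d r = 0 := by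
  have li := cols_li B s hs
  rw [Fintype.linearIndependent_iff] at li
  have key : ∑ r : s, d r.val • B.transpose r.val = 0 := by
    funext i
    simp only [Finset.sum_apply, Pi.smul_apply, smul_eq_mul, Pi.zero_apply,
      Matrix.transpose_apply]
    rw [Finset.sum_coe_sort s (fun r => d r * B i r)]
    exact hd i
  intro r hr
  exact li (fun r : s => d r.val) key ⟨r, hr⟩

theorem khatriRao_full_rank {J I R : ℕ}
    (A : Matrix (Fin J) (Fin R) ℝ) (B : Matrix (Fin I) (Fin R) ℝ)
    (hA : 1 ≤ kRank A) (hB : 1 ≤ kRank B)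
    (h : R + 1 ≤ kRank A + kRank B) :
    (khatriRao A B).rank = R := by
  have main : ∀ c : Fin R → ℝ, (khatriRao A B).mulVecLin c = 0 → c = 0 := by
    intro c hc
    have hc' : ∀ (j : Fin J) (i : Fin I), ∑ r, A j r * B i r * c r = 0 := by
      intro j i
      have := congrFun hc (j, i)
      simpa [Matrix.mulVecLin_apply, Matrix.mulVec, dotProduct, khatriRao] using this
    set S : Finset (Fin R) := Finset.univ.filter (fun r => c r ≠ 0) with hS
    have hmemS : ∀ r, r ∈ S ↔ c r ≠ 0 := fun r => by simp [hS]
    suffices hSe : S = ∅ by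
      funext r
      by_contra hr
      have : r ∈ S := (hmemS r).mpr hr
      simp [hSe] at this
    by_contra hSne
    obtain ⟨r0, hr0⟩ := Finset.nonempty_iff_ne_empty.mpr hSne
    by_cases hcard : S.card ≤ kRank B
    · -- few nonzero coefficients: columns of B involved are independent
      have hcols : ∀ j, A j r0 = 0 := by
        intro j
        have hz := li_combo B S hcard (fun r => c r * A j r) (fun i => by
          rw [← hc' j i, Finset.sum_subset (Finset.subset_univ S)]
          · exact Finset.sum_congr rfl (fun r _ => by ring)
          · intro r _ hr
            have : c r = 0 := by_contra fun hcr => hr ((hmemS r).mpr hcr)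
            simp [this]) r0 hr0
        exact (mul_eq_zero.mp hz).resolve_left ((hmemS r0).mp hr0)
      have h1 : ({r0} : Finset (Fin R)).card ≤ kRank A := by simpa using hA
      have := (cols_li A {r0} h1).ne_zero ⟨r0, Finset.mem_singleton_self r0⟩
      exact this (funext fun j => hcols j)
    · -- many nonzero coefficients: use a dual functional killing some columns of A
      push_neg at hcard
      have hScard : S.card ≤ R := by simpa using Finset.card_le_univ S
      obtain ⟨U, hUsub, hUcard⟩ := Finset.exists_subset_card_eq
        (s := S.erase r0) (n := S.card - kRank B) (by
          rw [Finset.card_erase_of_mem hr0]; omega)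
      have hUS : U ⊆ S := hUsub.trans (Finset.erase_subset r0 S)
      have hr0U : r0 ∉ U := fun hx => Finset.notMem_erase r0 S (hUsub hx)
      set T : Finset (Fin R) := insert r0 U with hT
      have hTcard : T.card ≤ kRank A := by
        rw [hT, Finset.card_insert_of_notMem hr0U, hUcard]; omega
      have liT := cols_li A T hTcard
      -- column r0 of A is not in the span of columns in U
      have hspan : A.transpose r0 ∉ Submodule.span ℝ
          ((fun r : T => A.transpose r.val) '' {x : T | x.val ∈ U}) := by
        have := liT.notMem_span_image (s := {x : T | x.val ∈ U})
          (x := ⟨r0, Finset.mem_insert_self r0 U⟩) (by simp [hr0U])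
        exact this
      obtain ⟨f, hf0, hfU⟩ := Submodule.exists_dual_map_eq_bot_of_notMem hspan inferInstance
      have hfzero : ∀ r ∈ U, f (A.transpose r) = 0 := by
        intro r hr
        have hmem : A.transpose r ∈ Submodule.span ℝ
            ((fun r : T => A.transpose r.val) '' {x : T | x.val ∈ U}) := by
          apply Submodule.subset_span
          exact ⟨⟨r, Finset.mem_insert_of_mem hr⟩, by simpa using hr, rfl⟩
        have : f (A.transpose r) ∈ Submodule.map f (Submodule.span ℝ
            ((fun r : T => A.transpose r.val) '' {x : T | x.val ∈ U})) :=
          Submodule.mem_map_of_mem hmem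
        rw [hfU] at this
        simpa using this
      -- apply f to the relations
      have hrel : ∀ i : Fin I, ∑ r ∈ S \ U, (c r * f (A.transpose r)) * B i r = 0 := by
        intro i
        have hv : (∑ r, (B i r * c r) • A.transpose r) = 0 := by
          funext j
          simp only [Finset.sum_apply, Pi.smul_apply, smul_eq_mul, Pi.zero_apply,
            Matrix.transpose_apply]
          rw [← hc' j i]
          exact Finset.sum_congr rfl (fun r _ => by ring)
        have hfv : ∑ r, (B i r * c r) * f (A.transpose r) = 0 := by
          have := congrArg f hv
          simpa [map_sum, map_smul, smul_eq_mul] using this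
        rw [← hfv]
        rw [Finset.sum_subset (Finset.sdiff_subset.trans (Finset.subset_univ S))]
        · exact Finset.sum_congr rfl (fun r _ => by ring)
        · intro r _ hr
          rw [Finset.mem_sdiff, not_and_or, not_not] at hr
          rcases hr with h1 | h2
          · have : c r = 0 := by_contra fun hcr => h1 ((hmemS r).mpr hcr)
            simp [this]
          · simp [hfzero r h2]
      have hSUcard : (S \ U).card ≤ kRank B := by
        rw [Finset.card_sdiff_of_subset hUS, hUcard]; omega
      have := li_combo B (S \ U) hSUcard (fun r => c r * f (A.transpose r)) hrel r0
        (Finset.mem_sdiff.mpr ⟨hr0, hr0U⟩)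
      rcases mul_eq_zero.mp this with h1 | h2
      · exact (hmemS r0).mp hr0 h1
      · exact hf0 h2
  have hinj : Function.Injective (khatriRao A B).mulVecLin :=
    LinearMap.ker_eq_bot.mp (LinearMap.ker_eq_bot'.mpr main)
  rw [Matrix.rank, LinearMap.finrank_range_of_inj hinj]
  exact Module.finrank_fin_fun ℝ
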